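/- Let r ≥ 3 be an integer and suppose a_{j,l} = −1 for all 2 ≤ j ≤ r and 1 ≤ l ≤ j−1 (equivalently, the Bott manifold X_r determined by the upper triangular matrix with all entries β_{ij} = 1 for i < j and 1 on the diagonal). Then for every p = 1, …, r−1 one has b_{p,1} = −1 and b_{p,q} = 0 for all 2 ≤ q ≤ r−p; hence ∑_{q=1}^{r−p} |b_{p,q}| = 1 ≤ 1 for every p, so by the main theorem X_r is Fano. (This gives a counterexample to Chary's claimed characterization, since |η_1^+| = |{1 < j ≤ r : β_{1j} > 0}| = r−1 ≥ 2.) -/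
import Mathlib


/-- Let `r ≥ 3` and let the Bott manifold `X_r` be determined by `a j l = −1` for all
`2 ≤ j ≤ r`, `1 ≤ l ≤ j−1` (equivalently, by the upper triangular matrix with all
entries `β_{ij} = 1` for `i < j` and `1` on the diagonal), where `b p q` is defined
recursively by `b p 1 = a (p+1) p` and
`b p q = a (p+q) p + ∑_{s=1}^{q−1} min(0, b p s) · a (p+q) (p+s)`.  Then for every
`p = 1, …, r−1` one has `b p 1 = −1` and `b p q = 0` for all `2 ≤ q ≤ r−p`; hence
`∑_{q=1}^{r−p} |b p q| = 1 ≤ 1` for every `p`, so by the main theorem `X_r` is Fano. -/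
theorem stmt_10 (r : ℕ) (hr : 3 ≤ r) (a : ℕ → ℕ → ℤ)
    (ha : ∀ j l, 2 ≤ j → j ≤ r → 1 ≤ l → l ≤ j - 1 → a j l = -1)
    (b : ℕ → ℕ → ℤ)
    (hb1 : ∀ p, 1 ≤ p → p ≤ r - 1 → b p 1 = a (p + 1) p)
    (hbq : ∀ p q, 1 ≤ p → 2 ≤ q → p + q ≤ r →
      b p q = a (p + q) p + ∑ s ∈ Finset.Icc 1 (q - 1), min 0 (b p s) * a (p + q) (p + s)) :
    ∀ p, 1 ≤ p → p ≤ r - 1 →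
      b p 1 = -1 ∧
      (∀ q, 2 ≤ q → q ≤ r - p → b p q = 0) ∧
      ∑ q ∈ Finset.Icc 1 (r - p), |b p q| = 1 := by
  intro p hp1 hpr
  have hbp1 : b p 1 = -1 := by
    rw [hb1 p hp1 hpr, ha (p + 1) p (by omega) (by omega) hp1 (by omega)]
  have hzero : ∀ q, 2 ≤ q → p + q ≤ r → b p q = 0 := by
    intro q
    induction q using Nat.strong_induction_on with
    | _ q ih =>
      intro hq2 hqr
      rw [hbq p q hp1 hq2 hqr]
      have hsum : ∑ s ∈ Finset.Icc 1 (q - 1), min 0 (b p s) * a (p + q) (p + s)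
          = ∑ s ∈ Finset.Icc 1 (q - 1), (if s = 1 then (1:ℤ) else 0) := by
        apply Finset.sum_congr rfl
        intro s hs
        simp only [Finset.mem_Icc] at hs
        have ha' : a (p + q) (p + s) = -1 :=
          ha _ _ (by omega) (by omega) (by omega) (by omega)
        rcases eq_or_ne s 1 with h1 | h1
        · subst h1; rw [hbp1, ha']; norm_num
        · rw [ih s (by omega) (by omega) (by omega), ha']; simp [h1]
      rw [hsum, Finset.sum_ite_eq' (Finset.Icc 1 (q - 1)) 1 (fun _ => (1:ℤ)),
        ha (p + q) p (by omega) (by omega) hp1 (by omega)]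
      have : (1:ℕ) ∈ Finset.Icc 1 (q - 1) := by simp; omega
      simp [this]
  refine ⟨hbp1, fun q hq2 hqr => hzero q hq2 (by omega), ?_⟩
  have hsum : ∑ q ∈ Finset.Icc 1 (r - p), |b p q|
      = ∑ q ∈ Finset.Icc 1 (r - p), (if q = 1 then (1:ℤ) else 0) := by
    apply Finset.sum_congr rfl
    intro q hq
    simp only [Finset.mem_Icc] at hq
    rcases eq_or_ne q 1 with h1 | h1
    · subst h1; rw [hbp1]; norm_num
    · rw [hzero q (by omega) (by omega)]; simp [h1]
  rw [hsum, Finset.sum_ite_eq' (Finset.Icc 1 (r - p)) 1 (fun _ => (1:ℤ))]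
  have : (1:ℕ) ∈ Finset.Icc 1 (r - p) := by simp; omega
  simp [this]
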